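/- With the optimal baseline b*_t(s,a) = q_{π,t}(s,a) and the corresponding optimal behavior policy μ* = μ^{*,b*}, for every time t and state s: Var( G^{b*}(τ^{μ*}_{t:T−1}) | S_t = s ) = ( Σ_a π_t(a|s)·√(u^{b*}_{π,t}(s,a)) )². In particular at t = T−1 this variance is 0, and u^{b*}_{π,t}(s,a) = ν_{π,t}(s,a) + Σ_{s'} p(s'|s,a)·Var( G^{b*}(τ^{μ*}_{t+1:T−1}) | S_{t+1}=s' ) for t ≤ T−2 with u^{b*}_{π,T−1} ≡ 0. -/

import Mathlib

open Finset

namespace DOpt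

variable {S A : Type}

/-- A time-indexed policy: for each time step and state, a probability distribution on actions. -/
def IsPolicy [Fintype A] (μ : ℕ → S → A → ℝ) : Prop :=
  ∀ t s, (∀ a, 0 ≤ μ t s a) ∧ ∑ a, μ t s a = 1

/-- A transition probability kernel on the finite state space. -/
def IsKernel [Fintype S] (p : S → A → S → ℝ) : Prop :=
  ∀ s a, (∀ s', 0 ≤ p s a s') ∧ ∑ s', p s a s' = 1

/-- Action value `q_{π,t}(s,a)` computed with `n` remaining transitions after time `t`
(`n = T - 1 - t` in a horizon-`T` MDP). -/
noncomputable def qval [Fintype S] [Fintype A] (p : S → A → S → ℝ) (π : ℕ → S → A → ℝ)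
    (r : S → A → ℝ) : ℕ → ℕ → S → A → ℝ
  | 0, _, s, a => r s a
  | n + 1, t, s, a =>
      r s a + ∑ s', p s a s' * ∑ a', π (t + 1) s' a' * qval p π r n (t + 1) s' a'

/-- `q_{π,t}(s,a)` in the horizon-`T` MDP. -/
noncomputable def qf [Fintype S] [Fintype A] (T : ℕ) (p : S → A → S → ℝ)
    (π : ℕ → S → A → ℝ) (r : S → A → ℝ) (t : ℕ) (s : S) (a : A) : ℝ :=
  qval p π r (T - 1 - t) t s a

/-- `v_{π,t}(s) = Σ_a π_t(a|s) q_{π,t}(s,a)`. -/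
noncomputable def vf [Fintype S] [Fintype A] (T : ℕ) (p : S → A → S → ℝ)
    (π : ℕ → S → A → ℝ) (r : S → A → ℝ) (t : ℕ) (s : S) : ℝ :=
  ∑ a, π t s a * qf T p π r t s a

/-- `ν_{π,t}(s,a) = Var_{s' ∼ p(·|s,a)}(v_{π,t+1}(s'))` for `t ≤ T-2`, and `0` at `t = T-1`. -/
noncomputable def nuf [Fintype S] [Fintype A] (T : ℕ) (p : S → A → S → ℝ)
    (π : ℕ → S → A → ℝ) (r : S → A → ℝ) (t : ℕ) (s : S) (a : A) : ℝ :=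
  if t + 2 ≤ T then
    (∑ s', p s a s' * (vf T p π r (t + 1) s') ^ 2) -
      (∑ s', p s a s' * vf T p π r (t + 1) s') ^ 2
  else 0

/-- Trajectories with `n` further transitions after the first action:
`(a_t, s_{t+1}, a_{t+1}, …, s_{t+n}, a_{t+n})`. -/
def Traj (S A : Type) : ℕ → Type
  | 0 => A
  | n + 1 => A × S × Traj S A n

/-- Expectation, over trajectories generated by the behavior policy `μ` starting at time `t`
in state `s` with `n` further transitions, of a function `f` of the trajectory. -/
noncomputable def Exp [Fintype S] [Fintype A] (p : S → A → S → ℝ) (μ : ℕ → S → A → ℝ) :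
    (n : ℕ) → ℕ → S → (Traj S A n → ℝ) → ℝ
  | 0, t, s, f => ∑ a, μ t s a * f a
  | n + 1, t, s, f =>
      ∑ a, μ t s a * ∑ s', p s a s' * Exp p μ n (t + 1) s' (fun τ => f (a, s', τ))

/-- Conditional variance of a function of the trajectory, given `S_t = s`. -/
noncomputable def Var [Fintype S] [Fintype A] (p : S → A → S → ℝ) (μ : ℕ → S → A → ℝ)
    (n : ℕ) (t : ℕ) (s : S) (f : Traj S A n → ℝ) : ℝ :=
  Exp p μ n t s (fun τ => (f τ) ^ 2) - (Exp p μ n t s f) ^ 2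

/-- `b̄_t(s) = Σ_a π_t(a|s) b_t(s,a)`. -/
noncomputable def bbar [Fintype A] (π : ℕ → S → A → ℝ) (b : ℕ → S → A → ℝ)
    (t : ℕ) (s : S) : ℝ :=
  ∑ a, π t s a * b t s a

/-- The per-decision importance-sampling estimator `G^b` with baseline `b`, target policy `π`
and behavior policy `μ`, as a function of the trajectory from time `t` (with `n` further
transitions, `n = T - 1 - t`). -/
noncomputable def Gest [Fintype S] [Fintype A] (π μ : ℕ → S → A → ℝ) (r : S → A → ℝ)
    (b : ℕ → S → A → ℝ) : (n : ℕ) → ℕ → S → Traj S A n → ℝ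
  | 0, t, s, a => (π t s a / μ t s a) * (r s a - b t s a) + bbar π b t s
  | n + 1, t, s, (a, s', τ) =>
      (π t s a / μ t s a) * (r s a + Gest π μ r b n (t + 1) s' τ - b t s a) + bbar π b t s

/-- Normalization of a weight vector into a probability distribution; the uniform distribution
when the total weight vanishes. -/
noncomputable def normPol [Fintype A] (w : A → ℝ) (a : A) : ℝ :=
  if (∑ a', w a') = 0 then ((Fintype.card A : ℝ))⁻¹ else w a / ∑ a', w a'

/-- `u_{π,t}(s,a)` (with baseline `b`), defined backwards in time together with the optimal
behavior policy `μ*`; the first argument is the number `n = T - 1 - t` of remaining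
transitions after time `t`. -/
noncomputable def uAux [Fintype S] [Fintype A] (T : ℕ) (p : S → A → S → ℝ)
    (π : ℕ → S → A → ℝ) (r : S → A → ℝ) (b : ℕ → S → A → ℝ) :
    ℕ → ℕ → S → A → ℝ
  | 0, t, s, a => (qf T p π r t s a - b t s a) ^ 2
  | n + 1, t, s, a =>
      (qf T p π r t s a - b t s a) ^ 2 + nuf T p π r t s a +
        ∑ s', p s a s' *
          Var p
            (fun t' s₁ a₁ => normPol (fun a₂ =>
              π t' s₁ a₂ * Real.sqrt (uAux T p π r b (n - (t' - (t + 1))) t' s₁ a₂)) a₁)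
            n (t + 1) s'
            (Gest π
              (fun t' s₁ a₁ => normPol (fun a₂ =>
                π t' s₁ a₂ * Real.sqrt (uAux T p π r b (n - (t' - (t + 1))) t' s₁ a₂)) a₁)
              r b n (t + 1) s')
  termination_by n => n
  decreasing_by all_goals omega

/-- `u_{π,t}(s,a)` in the horizon-`T` MDP, with baseline `b`. -/
noncomputable def uf [Fintype S] [Fintype A] (T : ℕ) (p : S → A → S → ℝ)
    (π : ℕ → S → A → ℝ) (r : S → A → ℝ) (b : ℕ → S → A → ℝ) (t : ℕ) (s : S) (a : A) : ℝ :=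
  uAux T p π r b (T - 1 - t) t s a

/-- The optimal behavior policy `μ*_t(a|s) ∝ π_t(a|s) √(u_{π,t}(s,a))` tailored to the
baseline `b` (uniform when all the weights vanish). -/
noncomputable def mustar [Fintype S] [Fintype A] (T : ℕ) (p : S → A → S → ℝ)
    (π : ℕ → S → A → ℝ) (r : S → A → ℝ) (b : ℕ → S → A → ℝ) (t : ℕ) (s : S) (a : A) : ℝ :=
  normPol (fun a' => π t s a' * Real.sqrt (uf T p π r b t s a')) a

/-- Conditional expectation `E[G^b(τ^μ_{t:T-1}) | S_t = s]`. -/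
noncomputable def ExpG [Fintype S] [Fintype A] (T : ℕ) (p : S → A → S → ℝ)
    (π μ : ℕ → S → A → ℝ) (r : S → A → ℝ) (b : ℕ → S → A → ℝ) (t : ℕ) (s : S) : ℝ :=
  Exp p μ (T - 1 - t) t s (Gest π μ r b (T - 1 - t) t s)

/-- Conditional variance `Var(G^b(τ^μ_{t:T-1}) | S_t = s)`. -/
noncomputable def VarG [Fintype S] [Fintype A] (T : ℕ) (p : S → A → S → ℝ)
    (π μ : ℕ → S → A → ℝ) (r : S → A → ℝ) (b : ℕ → S → A → ℝ) (t : ℕ) (s : S) : ℝ :=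
  Var p μ (T - 1 - t) t s (Gest π μ r b (T - 1 - t) t s)

/-- Membership in the enlarged policy-search space
`Λ = {μ : ∀ t,s,a, μ_t(a|s) = 0 → π_t(a|s)·u_{π,t}(s,a) = 0}`. -/
def inLambda [Fintype S] [Fintype A] (T : ℕ) (p : S → A → S → ℝ)
    (π : ℕ → S → A → ℝ) (r : S → A → ℝ) (b : ℕ → S → A → ℝ) (μ : ℕ → S → A → ℝ) : Prop :=
  ∀ t s a, t < T → μ t s a = 0 → π t s a * uf T p π r b t s a = 0


/-- The optimal baseline `b*_t(s,a) = q_{π,t}(s,a)`. -/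
noncomputable def bstar [Fintype S] [Fintype A] (T : ℕ) (p : S → A → S → ℝ)
    (π : ℕ → S → A → ℝ) (r : S → A → ℝ) : ℕ → S → A → ℝ :=
  fun t s a => qf T p π r t s a

/-- The zero baseline: with it, `Gest` is the plain PDIS estimator `G^{PDIS}`. -/
def zerob : ℕ → S → A → ℝ := fun _ _ _ => 0

section Proofs

variable {S A : Type} [Fintype S] [Fintype A]

private lemma sum_comb {ι : Type} [Fintype ι] (w x y : ι → ℝ) (hw : ∑ i, w i = 1)
    (α β γ : ℝ) :
    ∑ i, w i * (α * x i + β * y i + γ) =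
      α * (∑ i, w i * x i) + β * (∑ i, w i * y i) + γ := by
  have h : ∀ i ∈ (univ : Finset ι), w i * (α * x i + β * y i + γ)
      = α * (w i * x i) + β * (w i * y i) + γ * w i := fun i _ => by ring
  rw [Finset.sum_congr rfl h, Finset.sum_add_distrib, Finset.sum_add_distrib,
    ← Finset.mul_sum, ← Finset.mul_sum, ← Finset.mul_sum, hw]
  ring

private lemma Exp_comb (p : S → A → S → ℝ) (hp : IsKernel p) (μ : ℕ → S → A → ℝ)
    (hμ : ∀ t s, ∑ a, μ t s a = 1) :
    ∀ (n t : ℕ) (s : S) (f g : Traj S A n → ℝ) (α β γ : ℝ),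
      Exp p μ n t s (fun τ => α * f τ + β * g τ + γ) =
        α * Exp p μ n t s f + β * Exp p μ n t s g + γ
  | 0, t, s, f, g, α, β, γ => by
      simpa [Exp] using sum_comb (μ t s) f g (hμ t s) α β γ
  | n+1, t, s, f, g, α, β, γ => by
      simp only [Exp]
      have h1 : ∀ a : A, ∑ s', p s a s' *
          Exp p μ n (t+1) s' (fun τ => α * f (a, s', τ) + β * g (a, s', τ) + γ)
          = α * (∑ s', p s a s' * Exp p μ n (t+1) s' (fun τ => f (a, s', τ)))
            + β * (∑ s', p s a s' * Exp p μ n (t+1) s' (fun τ => g (a, s', τ))) + γ := by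
        intro a
        have h2 : ∀ s' ∈ (univ : Finset S),
            p s a s' * Exp p μ n (t+1) s' (fun τ => α * f (a, s', τ) + β * g (a, s', τ) + γ)
            = p s a s' * (α * Exp p μ n (t+1) s' (fun τ => f (a, s', τ))
              + β * Exp p μ n (t+1) s' (fun τ => g (a, s', τ)) + γ) := by
          intro s' _
          rw [Exp_comb p hp μ hμ n (t+1) s' _ _ α β γ]
        rw [Finset.sum_congr rfl h2]
        have h3 : ∀ s' ∈ (univ : Finset S),
            p s a s' * (α * Exp p μ n (t+1) s' (fun τ => f (a, s', τ))
              + β * Exp p μ n (t+1) s' (fun τ => g (a, s', τ)) + γ)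
            = α * (p s a s' * Exp p μ n (t+1) s' (fun τ => f (a, s', τ)))
              + β * (p s a s' * Exp p μ n (t+1) s' (fun τ => g (a, s', τ)))
              + γ * p s a s' := fun s' _ => by ring
        rw [Finset.sum_congr rfl h3, Finset.sum_add_distrib, Finset.sum_add_distrib,
          ← Finset.mul_sum, ← Finset.mul_sum, ← Finset.mul_sum, (hp s a).2]
        ring
      rw [Finset.sum_congr rfl (fun a _ => by rw [h1 a])]
      exact sum_comb (μ t s) _ _ (hμ t s) α β γ

private lemma Exp_congr (p : S → A → S → ℝ) (μ μ' : ℕ → S → A → ℝ) :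
    ∀ (n t : ℕ) (s : S) (f : Traj S A n → ℝ),
      (∀ k, t ≤ k → k ≤ t + n → μ k = μ' k) →
      Exp p μ n t s f = Exp p μ' n t s f
  | 0, t, s, f, h => by simp [Exp, h t le_rfl (by omega)]
  | n+1, t, s, f, h => by
      simp only [Exp, h t le_rfl (by omega)]
      refine Finset.sum_congr rfl fun a _ => ?_
      congr 1
      refine Finset.sum_congr rfl fun s' _ => ?_
      congr 1
      exact Exp_congr p μ μ' n (t+1) s' _ (fun k h1 h2 => h k (by omega) (by omega))

private lemma Gest_congr (π μ μ' : ℕ → S → A → ℝ) (r : S → A → ℝ) (b : ℕ → S → A → ℝ) :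
    ∀ (n t : ℕ) (s : S) (τ : Traj S A n),
      (∀ k, t ≤ k → k ≤ t + n → μ k = μ' k) →
      Gest π μ r b n t s τ = Gest π μ' r b n t s τ
  | 0, t, s, a, h => by simp [Gest, h t le_rfl (by omega)]
  | n+1, t, s, (a, s', τ), h => by
      simp only [Gest, h t le_rfl (by omega),
        Gest_congr π μ μ' r b n (t+1) s' τ (fun k h1 h2 => h k (by omega) (by omega))]

private lemma normPol_sum_one [Nonempty A] (w : A → ℝ) : ∑ a, normPol w a = 1 := by
  unfold normPol
  by_cases h : (∑ a', w a') = 0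
  · simp only [h, if_true]
    rw [Finset.sum_const, Finset.card_univ, nsmul_eq_mul]
    rw [mul_inv_cancel₀]
    exact_mod_cast Fintype.card_ne_zero
  · simp only [h, if_false]
    rw [← Finset.sum_div, div_self h]

private lemma mustar_sum_one [Nonempty A] (T : ℕ) (p : S → A → S → ℝ)
    (π : ℕ → S → A → ℝ) (r : S → A → ℝ) (b : ℕ → S → A → ℝ) (t : ℕ) (s : S) :
    ∑ a, mustar T p π r b t s a = 1 := normPol_sum_one _

private lemma qf_last (T : ℕ) (p : S → A → S → ℝ) (π : ℕ → S → A → ℝ) (r : S → A → ℝ)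
    (t : ℕ) (h : t + 1 = T) (s : S) (a : A) : qf T p π r t s a = r s a := by
  unfold qf
  rw [show T - 1 - t = 0 by omega]
  rfl

private lemma qf_step (T : ℕ) (p : S → A → S → ℝ) (π : ℕ → S → A → ℝ) (r : S → A → ℝ)
    (t : ℕ) (h : t + 2 ≤ T) (s : S) (a : A) :
    qf T p π r t s a = r s a + ∑ s', p s a s' * vf T p π r (t+1) s' := by
  unfold qf
  rw [show T - 1 - t = (T - 1 - (t+1)) + 1 by omega, qval]
  rfl

private lemma bbar_bstar (T : ℕ) (p : S → A → S → ℝ) (π : ℕ → S → A → ℝ) (r : S → A → ℝ)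
    (t : ℕ) (s : S) : bbar π (bstar T p π r) t s = vf T p π r t s := rfl

private lemma nuf_nonneg (T : ℕ) (p : S → A → S → ℝ) (hp : IsKernel p)
    (π : ℕ → S → A → ℝ) (r : S → A → ℝ) (t : ℕ) (s : S) (a : A) :
    0 ≤ nuf T p π r t s a := by
  unfold nuf
  split
  · rw [sub_nonneg]
    have h := Finset.sum_mul_sq_le_sq_mul_sq univ (fun s' => Real.sqrt (p s a s'))
      (fun s' => Real.sqrt (p s a s') * vf T p π r (t+1) s')
    have e1 : ∀ s' ∈ (univ : Finset S),
        Real.sqrt (p s a s') * (Real.sqrt (p s a s') * vf T p π r (t+1) s')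
          = p s a s' * vf T p π r (t+1) s' := by
      intro s' _
      rw [← mul_assoc, Real.mul_self_sqrt ((hp s a).1 s')]
    have e2 : ∀ s' ∈ (univ : Finset S),
        (Real.sqrt (p s a s')) ^ 2 = p s a s' := fun s' _ => Real.sq_sqrt ((hp s a).1 s')
    have e3 : ∀ s' ∈ (univ : Finset S),
        (Real.sqrt (p s a s') * vf T p π r (t+1) s') ^ 2
          = p s a s' * (vf T p π r (t+1) s') ^ 2 := by
      intro s' _
      rw [mul_pow, Real.sq_sqrt ((hp s a).1 s')]
    rw [Finset.sum_congr rfl e1, Finset.sum_congr rfl e2, Finset.sum_congr rfl e3,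
      (hp s a).2, one_mul] at h
    exact h
  · exact le_rfl

private lemma key_alg [Nonempty A] (pp u : A → ℝ) (hpi : ∀ a, 0 ≤ pp a) (hu : ∀ a, 0 ≤ u a) :
    ∑ a, normPol (fun a' => pp a' * Real.sqrt (u a')) a *
        (pp a / normPol (fun a' => pp a' * Real.sqrt (u a')) a) ^ 2 * u a =
      (∑ a, pp a * Real.sqrt (u a)) ^ 2 := by
  by_cases h0 : (∑ a', pp a' * Real.sqrt (u a')) = 0
  · have hz : ∀ a, pp a * Real.sqrt (u a) = 0 := by
      intro a
      exact (Finset.sum_eq_zero_iff_of_nonneg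
        (fun a _ => mul_nonneg (hpi a) (Real.sqrt_nonneg _))).mp h0 a (mem_univ a)
    have hterm : ∀ a ∈ (univ : Finset A), normPol (fun a' => pp a' * Real.sqrt (u a')) a *
        (pp a / normPol (fun a' => pp a' * Real.sqrt (u a')) a) ^ 2 * u a = 0 := by
      intro a _
      rcases mul_eq_zero.mp (hz a) with hpa | hsa
      · simp [hpa]
      · have : u a = 0 := le_antisymm (Real.sqrt_eq_zero'.mp hsa) (hu a)
        simp [this]
    rw [Finset.sum_eq_zero hterm, h0]
    ring
  · have hterm : ∀ a ∈ (univ : Finset A), normPol (fun a' => pp a' * Real.sqrt (u a')) a *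
        (pp a / normPol (fun a' => pp a' * Real.sqrt (u a')) a) ^ 2 * u a
        = pp a * Real.sqrt (u a) * (∑ a', pp a' * Real.sqrt (u a')) := by
      intro a _
      have hnp : normPol (fun a' => pp a' * Real.sqrt (u a')) a
          = pp a * Real.sqrt (u a) / (∑ a', pp a' * Real.sqrt (u a')) := by
        simp [normPol, h0]
      by_cases hz : pp a * Real.sqrt (u a) = 0
      · rcases mul_eq_zero.mp hz with hpa | hsa
        · simp [hnp, hz, hpa]
        · have hu0 : u a = 0 := le_antisymm (Real.sqrt_eq_zero'.mp hsa) (hu a)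
          simp [hnp, hz, hu0]
      · have hpa : pp a ≠ 0 := fun h => hz (by simp [h])
        have hsa : Real.sqrt (u a) ≠ 0 := fun h => hz (by simp [h])
        rw [hnp, show u a = Real.sqrt (u a) * Real.sqrt (u a) from
          (Real.mul_self_sqrt (hu a)).symm]
        rw [Real.sqrt_mul_self (Real.sqrt_nonneg _)]
        field_simp
    rw [Finset.sum_congr rfl hterm, ← Finset.sum_mul]
    ring

end Proofs

section Proofs2

variable {S A : Type} [Fintype S] [Fintype A]

private lemma Exp_Gest (T : ℕ) (p : S → A → S → ℝ) (hp : IsKernel p)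
    (π : ℕ → S → A → ℝ) (r : S → A → ℝ) (μ : ℕ → S → A → ℝ)
    (hμ : ∀ t s, ∑ a, μ t s a = 1) :
    ∀ (n t : ℕ) (s : S), t + n + 1 = T →
      Exp p μ n t s (Gest π μ r (bstar T p π r) n t s) = vf T p π r t s
  | 0, t, s, h => by
      have hq : ∀ a : A, bstar T p π r t s a = r s a :=
        fun a => qf_last T p π r t (by omega) s a
      have hg : ∀ a ∈ (univ : Finset A),
          μ t s a * Gest π μ r (bstar T p π r) 0 t s a = μ t s a * vf T p π r t s := by
        intro a _
        congr 1
        show (π t s a / μ t s a) * (r s a - bstar T p π r t s a) + bbar π (bstar T p π r) t s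
          = vf T p π r t s
        rw [hq a, sub_self, mul_zero, zero_add, bbar_bstar]
      simp only [Exp]
      rw [Finset.sum_congr rfl hg, ← Finset.sum_mul, hμ t s, one_mul]
  | n+1, t, s, h => by
      have IH : ∀ s', Exp p μ n (t+1) s' (Gest π μ r (bstar T p π r) n (t+1) s')
          = vf T p π r (t+1) s' :=
        fun s' => Exp_Gest T p hp π r μ hμ n (t+1) s' (by omega)
      simp only [Exp]
      have hbody : ∀ a ∈ (univ : Finset A),
          μ t s a * (∑ s', p s a s' * Exp p μ n (t+1) s'
            (fun τ => Gest π μ r (bstar T p π r) (n+1) t s (a, s', τ)))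
          = μ t s a * vf T p π r t s := by
        intro a _
        congr 1
        have hfun : ∀ s' : S, (fun τ => Gest π μ r (bstar T p π r) (n+1) t s (a, s', τ))
            = fun τ => (π t s a / μ t s a) * Gest π μ r (bstar T p π r) n (t+1) s' τ
              + (0:ℝ) * Gest π μ r (bstar T p π r) n (t+1) s' τ
              + ((π t s a / μ t s a) * (r s a - bstar T p π r t s a) + vf T p π r t s) := by
          intro s'; funext τ
          show (π t s a / μ t s a) * (r s a + Gest π μ r (bstar T p π r) n (t+1) s' τ
              - bstar T p π r t s a) + bbar π (bstar T p π r) t s = _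
          rw [bbar_bstar]; ring
        have hexp : ∀ s' ∈ (univ : Finset S),
            p s a s' * Exp p μ n (t+1) s'
              (fun τ => Gest π μ r (bstar T p π r) (n+1) t s (a, s', τ))
            = p s a s' * ((π t s a / μ t s a) * vf T p π r (t+1) s'
              + (0:ℝ) * vf T p π r (t+1) s'
              + ((π t s a / μ t s a) * (r s a - bstar T p π r t s a) + vf T p π r t s)) := by
          intro s' _
          congr 1
          rw [hfun s']
          have hc := Exp_comb p hp μ hμ n (t+1) s'
            (Gest π μ r (bstar T p π r) n (t+1) s')
            (Gest π μ r (bstar T p π r) n (t+1) s')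
            (π t s a / μ t s a) 0
            ((π t s a / μ t s a) * (r s a - bstar T p π r t s a) + vf T p π r t s)
          rw [hc, IH s']
        rw [Finset.sum_congr rfl hexp,
          sum_comb (p s a) (vf T p π r (t+1)) (vf T p π r (t+1)) (hp s a).2]
        have hqs : bstar T p π r t s a = r s a + ∑ s', p s a s' * vf T p π r (t+1) s' :=
          qf_step T p π r t (by omega) s a
        rw [hqs]; ring
      rw [Finset.sum_congr rfl hbody, ← Finset.sum_mul, hμ t s, one_mul]

end Proofs2
section Proofs3

variable {S A : Type} [Fintype S] [Fintype A]

private lemma main_sm [Nonempty A] (T : ℕ) (p : S → A → S → ℝ) (hp : IsKernel p)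
    (π : ℕ → S → A → ℝ) (hπ : IsPolicy π) (r : S → A → ℝ) :
    ∀ (n t : ℕ) (s : S), t + n + 1 = T →
      Exp p (mustar T p π r (bstar T p π r)) n t s
        (fun τ => (Gest π (mustar T p π r (bstar T p π r)) r (bstar T p π r) n t s τ) ^ 2)
      = (∑ a, π t s a * Real.sqrt (uAux T p π r (bstar T p π r) n t s a)) ^ 2
        + (vf T p π r t s) ^ 2
  | 0, t, s, h => by
      have hq : ∀ a : A, bstar T p π r t s a = r s a :=
        fun a => qf_last T p π r t (by omega) s a
      have hg : ∀ a : A, Gest π (mustar T p π r (bstar T p π r)) r (bstar T p π r) 0 t s a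
          = vf T p π r t s := by
        intro a
        show (π t s a / mustar T p π r (bstar T p π r) t s a) * (r s a - bstar T p π r t s a)
          + bbar π (bstar T p π r) t s = vf T p π r t s
        rw [hq a, sub_self, mul_zero, zero_add, bbar_bstar]
      have hu : ∀ a : A, uAux T p π r (bstar T p π r) 0 t s a = 0 := by
        intro a
        rw [uAux]
        simp [bstar]
      simp only [Exp, hg, hu, Real.sqrt_zero, mul_zero, Finset.sum_const_zero]
      rw [← Finset.sum_mul, mustar_sum_one, one_mul]
      ring
  | n+1, t, s, h => by
      have hMsum : ∀ t' s', ∑ a, mustar T p π r (bstar T p π r) t' s' a = 1 :=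
        fun t' s' => mustar_sum_one T p π r (bstar T p π r) t' s'
      set B := bstar T p π r with hB
      set M := mustar T p π r B with hM
      have hagree : ∀ k, t+1 ≤ k → k ≤ (t+1) + n →
          (fun t' s₁ a₁ => normPol (fun a₂ =>
            π t' s₁ a₂ * Real.sqrt (uAux T p π r B (n - (t' - (t + 1))) t' s₁ a₂)) a₁) k
          = M k := by
        intro k h1 h2
        funext s₁ a₁
        have hd : n - (k - (t+1)) = T - 1 - k := by omega
        simp only [hd]
        rfl
      have hIH2 : ∀ s', Exp p M n (t+1) s' (fun τ => (Gest π M r B n (t+1) s' τ)^2)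
          = (∑ a, π (t+1) s' a * Real.sqrt (uAux T p π r B n (t+1) s' a))^2
            + (vf T p π r (t+1) s')^2 :=
        fun s' => main_sm T p hp π hπ r n (t+1) s' (by omega)
      have hIH1 : ∀ s', Exp p M n (t+1) s' (Gest π M r B n (t+1) s') = vf T p π r (t+1) s' :=
        fun s' => Exp_Gest T p hp π r M hMsum n (t+1) s' (by omega)
      -- the value of uAux at n+1
      have hu : ∀ a : A, uAux T p π r B (n+1) t s a
          = nuf T p π r t s a + ∑ s', p s a s' *
              (∑ a', π (t+1) s' a' * Real.sqrt (uAux T p π r B n (t+1) s' a'))^2 := by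
        intro a
        rw [uAux]
        have hq0 : (qf T p π r t s a - B t s a)^2 = 0 := by simp [hB, bstar]
        rw [hq0, zero_add]
        congr 1
        refine Finset.sum_congr rfl fun s' _ => ?_
        congr 1
        simp only [Var]
        have hGfun : Gest π (fun t' s₁ a₁ => normPol (fun a₂ =>
              π t' s₁ a₂ * Real.sqrt (uAux T p π r B (n - (t' - (t + 1))) t' s₁ a₂)) a₁)
              r B n (t+1) s'
            = Gest π M r B n (t+1) s' :=
          funext fun τ => Gest_congr π _ M r B n (t+1) s' τ hagree
        rw [hGfun]
        rw [Exp_congr p _ M n (t+1) s' _ hagree, Exp_congr p _ M n (t+1) s' _ hagree]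
        rw [hIH1 s']
        have := hIH2 s'
        rw [this]
        ring
      have hunn : ∀ a : A, 0 ≤ uAux T p π r B (n+1) t s a := by
        intro a
        rw [hu a]
        have h1 : 0 ≤ ∑ s', p s a s' *
            (∑ a', π (t+1) s' a' * Real.sqrt (uAux T p π r B n (t+1) s' a'))^2 :=
          Finset.sum_nonneg fun s' _ => mul_nonneg ((hp s a).1 s') (sq_nonneg _)
        have h2 := nuf_nonneg T p hp π r t s a
        linarith
      have hnuf : ∀ a : A, nuf T p π r t s a
          = (∑ s', p s a s' * (vf T p π r (t+1) s')^2)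
            - (∑ s', p s a s' * vf T p π r (t+1) s')^2 := by
        intro a
        unfold nuf
        rw [if_pos (by omega : t + 2 ≤ T)]
      -- per-action computation
      simp only [Exp]
      have hbody : ∀ a ∈ (univ : Finset A),
          M t s a * (∑ s', p s a s' * Exp p M n (t+1) s'
            (fun τ => (Gest π M r B (n+1) t s (a, s', τ))^2))
          = M t s a * (π t s a / M t s a)^2 * uAux T p π r B (n+1) t s a
            + (vf T p π r t s)^2 * M t s a := by
        intro a _
        have hfun : ∀ s' : S, (fun τ => (Gest π M r B (n+1) t s (a, s', τ))^2)
            = fun τ => (π t s a / M t s a)^2 * ((Gest π M r B n (t+1) s' τ)^2)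
              + (2*(π t s a / M t s a)^2*(r s a - B t s a)
                 + 2*(π t s a / M t s a)*(vf T p π r t s)) * Gest π M r B n (t+1) s' τ
              + ((π t s a / M t s a)^2*(r s a - B t s a)^2
                 + 2*(π t s a / M t s a)*(r s a - B t s a)*(vf T p π r t s)
                 + (vf T p π r t s)^2) := by
          intro s'; funext τ
          show ((π t s a / M t s a) * (r s a + Gest π M r B n (t+1) s' τ - B t s a)
            + bbar π B t s)^2 = _
          rw [hB, bbar_bstar]; ring
        have hexp : ∀ s' ∈ (univ : Finset S),
            p s a s' * Exp p M n (t+1) s' (fun τ => (Gest π M r B (n+1) t s (a, s', τ))^2)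
            = p s a s' * ((π t s a / M t s a)^2
                * ((∑ a', π (t+1) s' a' * Real.sqrt (uAux T p π r B n (t+1) s' a'))^2
                   + (vf T p π r (t+1) s')^2)
              + (2*(π t s a / M t s a)^2*(r s a - B t s a)
                 + 2*(π t s a / M t s a)*(vf T p π r t s)) * vf T p π r (t+1) s'
              + ((π t s a / M t s a)^2*(r s a - B t s a)^2
                 + 2*(π t s a / M t s a)*(r s a - B t s a)*(vf T p π r t s)
                 + (vf T p π r t s)^2)) := by
          intro s' _
          congr 1
          rw [hfun s']
          have hc := Exp_comb p hp M hMsum n (t+1) s'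
            (fun τ => (Gest π M r B n (t+1) s' τ)^2)
            (Gest π M r B n (t+1) s')
            ((π t s a / M t s a)^2)
            (2*(π t s a / M t s a)^2*(r s a - B t s a)
              + 2*(π t s a / M t s a)*(vf T p π r t s))
            ((π t s a / M t s a)^2*(r s a - B t s a)^2
              + 2*(π t s a / M t s a)*(r s a - B t s a)*(vf T p π r t s)
              + (vf T p π r t s)^2)
          rw [hc, hIH1 s', hIH2 s']
        rw [Finset.sum_congr rfl hexp,
          sum_comb (p s a)
            (fun s' => (∑ a', π (t+1) s' a' * Real.sqrt (uAux T p π r B n (t+1) s' a'))^2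
              + (vf T p π r (t+1) s')^2)
            (vf T p π r (t+1)) (hp s a).2]
        have hqs : B t s a = r s a + ∑ s', p s a s' * vf T p π r (t+1) s' := by
          rw [hB]; exact qf_step T p π r t (by omega) s a
        have hsplit : ∑ s', p s a s' *
            ((∑ a', π (t+1) s' a' * Real.sqrt (uAux T p π r B n (t+1) s' a'))^2
              + (vf T p π r (t+1) s')^2)
            = (∑ s', p s a s' *
                (∑ a', π (t+1) s' a' * Real.sqrt (uAux T p π r B n (t+1) s' a'))^2)
              + (∑ s', p s a s' * (vf T p π r (t+1) s')^2) := by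
          rw [← Finset.sum_add_distrib]
          exact Finset.sum_congr rfl fun s' _ => by ring
        rw [hsplit, hu a, hnuf a, hqs]
        ring
      rw [Finset.sum_congr rfl hbody, Finset.sum_add_distrib, ← Finset.mul_sum,
        hM, hMsum t s, mul_one]
      have hMdef : ∀ a : A, mustar T p π r B t s a
          = normPol (fun a' => π t s a' * Real.sqrt (uAux T p π r B (n+1) t s a')) a := by
        intro a
        unfold mustar uf
        rw [show T - 1 - t = n + 1 by omega]
      have hsum1 : ∑ a, mustar T p π r B t s a * (π t s a / mustar T p π r B t s a)^2
            * uAux T p π r B (n+1) t s a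
          = (∑ a, π t s a * Real.sqrt (uAux T p π r B (n+1) t s a))^2 := by
        simp only [hMdef]
        exact key_alg (π t s) (fun a => uAux T p π r B (n+1) t s a)
          (fun a => (hπ t s).1 a) hunn
      rw [hsum1]

end Proofs3
/-- with the optimal baseline `b*_t(s,a) = q_{π,t}(s,a)` and the corresponding
optimal behavior policy `μ* = μ^{*,b*}`, for every time `t` and state `s`,
`Var(G^{b*}(τ^{μ*}_{t:T−1})|S_t=s) = (Σ_a π_t(a|s)√(u^{b*}_{π,t}(s,a)))²`; in particular this
variance vanishes at `t = T−1`, and `u^{b*}_{π,T−1} ≡ 0` while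
`u^{b*}_{π,t}(s,a) = ν_{π,t}(s,a) + Σ_{s'} p(s'|s,a)·Var(G^{b*}(τ^{μ*}_{t+1:T−1})|S_{t+1}=s')`
for `t ≤ T−2`. -/
theorem doubly_optimal_variance {S A : Type} [Fintype S] [Fintype A] [Nonempty A]
    (T : ℕ) (hT : 1 ≤ T)
    (p : S → A → S → ℝ) (hp : IsKernel p)
    (r : S → A → ℝ)
    (π : ℕ → S → A → ℝ) (hπ : IsPolicy π) :
    (∀ (t : ℕ) (s : S), t < T →
      VarG T p π (mustar T p π r (bstar T p π r)) r (bstar T p π r) t s =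
        (∑ a, π t s a * Real.sqrt (uf T p π r (bstar T p π r) t s a)) ^ 2) ∧
    (∀ s : S,
      VarG T p π (mustar T p π r (bstar T p π r)) r (bstar T p π r) (T - 1) s = 0) ∧
    (∀ (s : S) (a : A), uf T p π r (bstar T p π r) (T - 1) s a = 0) ∧
    (∀ (t : ℕ), t + 2 ≤ T → ∀ (s : S) (a : A),
      uf T p π r (bstar T p π r) t s a =
        nuf T p π r t s a +
          ∑ s', p s a s' *
            VarG T p π (mustar T p π r (bstar T p π r)) r (bstar T p π r) (t + 1) s') := by
  have hMsum : ∀ t' s', ∑ a, mustar T p π r (bstar T p π r) t' s' a = 1 :=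
    fun t' s' => mustar_sum_one T p π r (bstar T p π r) t' s'
  have P1 : ∀ (t : ℕ) (s : S), t < T →
      VarG T p π (mustar T p π r (bstar T p π r)) r (bstar T p π r) t s =
        (∑ a, π t s a * Real.sqrt (uf T p π r (bstar T p π r) t s a)) ^ 2 := by
    intro t s ht
    unfold VarG Var uf
    rw [Exp_Gest T p hp π r _ hMsum (T-1-t) t s (by omega)]
    rw [main_sm T p hp π hπ r (T-1-t) t s (by omega)]
    ring
  have P3 : ∀ (s : S) (a : A), uf T p π r (bstar T p π r) (T - 1) s a = 0 := by
    intro s a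
    unfold uf
    rw [show T - 1 - (T-1) = 0 by omega, uAux]
    simp [bstar]
  refine ⟨P1, ?_, P3, ?_⟩
  · intro s
    rw [P1 (T-1) s (by omega)]
    simp [P3]
  · intro t h2 s a
    unfold uf
    rw [show T - 1 - t = (T - 2 - t) + 1 by omega, uAux]
    rw [show (qf T p π r t s a - bstar T p π r t s a)^2 = 0 by simp [bstar], zero_add]
    congr 1
    refine Finset.sum_congr rfl fun s' _ => ?_
    congr 1
    have hagree : ∀ k, t+1 ≤ k → k ≤ (t+1) + (T-2-t) →
        (fun t' s₁ a₁ => normPol (fun a₂ =>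
          π t' s₁ a₂ * Real.sqrt (uAux T p π r (bstar T p π r)
            ((T-2-t) - (t' - (t + 1))) t' s₁ a₂)) a₁) k
        = mustar T p π r (bstar T p π r) k := by
      intro k h1 hk2
      funext s₁ a₁
      have hd : (T-2-t) - (k - (t+1)) = T - 1 - k := by omega
      simp only [hd]
      rfl
    have hGfun : Gest π (fun t' s₁ a₁ => normPol (fun a₂ =>
          π t' s₁ a₂ * Real.sqrt (uAux T p π r (bstar T p π r)
            ((T-2-t) - (t' - (t + 1))) t' s₁ a₂)) a₁)
          r (bstar T p π r) (T-2-t) (t+1) s'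
        = Gest π (mustar T p π r (bstar T p π r)) r (bstar T p π r) (T-2-t) (t+1) s' :=
      funext fun τ => Gest_congr π _ _ r _ (T-2-t) (t+1) s' τ hagree
    unfold VarG
    rw [show T - 1 - (t+1) = T - 2 - t by omega]
    simp only [Var]
    rw [hGfun]
    rw [Exp_congr p _ (mustar T p π r (bstar T p π r)) (T-2-t) (t+1) s' _ hagree]
    rw [Exp_congr p _ (mustar T p π r (bstar T p π r)) (T-2-t) (t+1) s' _ hagree]


end DOpt
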